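/- arXiv:2605.06258 — 2 statements merged into one kernel-verified Lean document; each statement's English description precedes it below -/
import Mathlib

section
/- Let σ: ℝ → ℝ be L-Lipschitz and applied elementwise, h ∈ ℝ^n with ‖h‖₂ = 1, W ∈ ℝ^{m×n}, and W⁺ = W - γ∇_W𝓛 a single gradient step on the data point producing h, where ∇_W𝓛 = (∇_z𝓛)hᵀ for z = Wh and ∇_z𝓛 = σ'(z) ⊙ ∇_σ(z)𝓛 with |σ'(z)_i| ≤ L for all i. Then elementwise |σ(W⁺h) - σ(Wh)| ≤ L² · |γ ∇_{σ(z)}𝓛| = L² |h⁺ - h|, where h⁺ = σ(Wh) - γ∇_{σ(Wh)}𝓛 is the virtual update of the post-activation. -/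
open Matrix

/-- Proposition 3.3 (magnitude part): with `σ` L-Lipschitz, `‖h‖₂ = 1`,
`∇_z𝓛 = σ'(z) ⊙ ∇_{σ(z)}𝓛` with `|σ'(z)_i| ≤ L`, and `W⁺ = W - γ(∇_z𝓛)hᵀ`,
elementwise `|σ(W⁺h) - σ(Wh)| ≤ L²·|γ ∇_{σ(z)}𝓛|`. -/
theorem stmt3 {m n : ℕ} (σ : ℝ → ℝ) (L : ℝ)
    (hσ : ∀ a b : ℝ, |σ a - σ b| ≤ L * |a - b|)
    (W : Matrix (Fin m) (Fin n) ℝ) (h : Fin n → ℝ)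
    (hh : ∑ i, h i ^ 2 = 1)
    (γ : ℝ) (s gradpost gradz : Fin m → ℝ)
    (hs : ∀ i, |s i| ≤ L)
    (hgz : ∀ i, gradz i = s i * gradpost i)
    (Wp : Matrix (Fin m) (Fin n) ℝ)
    (hWp : Wp = W - γ • vecMulVec gradz h) :
    ∀ i, |σ (Wp.mulVec h i) - σ (W.mulVec h i)| ≤ L ^ 2 * |γ * gradpost i| := by
  intro i
  have hL : 0 ≤ L := le_trans (abs_nonneg _) (hs i)
  have key : Wp.mulVec h i = W.mulVec h i - γ * gradz i := by
    subst hWp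
    simp only [mulVec, dotProduct, Matrix.sub_apply, Matrix.smul_apply, vecMulVec_apply,
      smul_eq_mul, sub_mul, Finset.sum_sub_distrib]
    congr 1
    have : ∑ j, γ * (gradz i * h j) * h j = γ * gradz i * ∑ j, h j ^ 2 := by
      rw [Finset.mul_sum]; congr 1; ext j; ring
    rw [this, hh, mul_one]
  calc |σ (Wp.mulVec h i) - σ (W.mulVec h i)|
      ≤ L * |Wp.mulVec h i - W.mulVec h i| := hσ _ _
    _ = L * (|γ| * |s i| * |gradpost i|) := by
        rw [key, hgz]; rw [show W.mulVec h i - γ * (s i * gradpost i) - W.mulVec h i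
          = -(γ * (s i * gradpost i)) by ring, abs_neg, abs_mul, abs_mul]; ring
    _ ≤ L * (|γ| * L * |gradpost i|) := by
        apply mul_le_mul_of_nonneg_left _ hL
        apply mul_le_mul_of_nonneg_right _ (abs_nonneg _)
        exact mul_le_mul_of_nonneg_left (hs i) (abs_nonneg _)
    _ = L ^ 2 * |γ * gradpost i| := by rw [abs_mul]; ring
end

section
/- Let H ∈ ℝ^{d×N} with N > d, Y ∈ ℝ^N with Y ≠ Ȳ (where Ȳ is the constant vector of the mean of Y), λ > 0, W with ‖W‖_op ≤ c₀, ‖H‖_F ≤ c₁, and define the Target Linearity 𝒯_λ(H,Y) = 1 - ‖Y - Hᵀ(HHᵀ+λI)⁻¹HY‖₂²/‖Y - Ȳ‖₂², and the surrogate S = YᵀHᵀWᵀWHY. If S > 0, then 𝒯_λ(H,Y) ≥ 1 - C/S, where C = ‖Y‖₂⁴ c₀² (2λ + c₁²)² / (4λ ‖Y - Ȳ‖₂²). -/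
open Matrix BigOperators

lemma dotSelfNonneg {n : ℕ} (v : Fin n → ℝ) : 0 ≤ v ⬝ᵥ v :=
  Finset.sum_nonneg fun i _ => mul_self_nonneg (v i)

lemma dotSelfPos {n : ℕ} {v : Fin n → ℝ} (h : v ≠ 0) : 0 < v ⬝ᵥ v :=
  lt_of_le_of_ne (dotSelfNonneg v) fun e => h (dotProduct_self_eq_zero.mp e.symm)

/-- Theorem 4.3 (surrogate lower-bounds Target Linearity): with `N > d`, `λ > 0`,
`‖W‖_op ≤ c₀` (quadratic-form formulation), `‖H‖_F ≤ c₁`, `Y ≠ Ȳ`, and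
`S = YᵀHᵀWᵀWHY > 0`, the Target Linearity satisfies `𝒯_λ(H,Y) ≥ 1 - C/S` with
`C = ‖Y‖₂⁴ c₀² (2λ + c₁²)² / (4λ ‖Y - Ȳ‖₂²)`. -/
theorem stmt18 {d N mdim : ℕ} (hdN : d < N)
    (H : Matrix (Fin d) (Fin N) ℝ) (Y : Fin N → ℝ)
    (l : ℝ) (hl : 0 < l)
    (W : Matrix (Fin mdim) (Fin d) ℝ) (c0 c1 : ℝ)
    (hW : ∀ v : Fin d → ℝ, (W.mulVec v) ⬝ᵥ (W.mulVec v) ≤ c0 ^ 2 * (v ⬝ᵥ v))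
    (hH : ∑ i, ∑ j, (H i j) ^ 2 ≤ c1 ^ 2)
    (Ybar : Fin N → ℝ) (hYbar : Ybar = fun _ => (∑ i, Y i) / N)
    (hYne : Y ≠ Ybar)
    (S : ℝ) (hS : S = Y ⬝ᵥ (Hᵀ * Wᵀ * W * H).mulVec Y) (hSpos : 0 < S) :
    1 - ((Y - (Hᵀ * (H * Hᵀ + l • (1 : Matrix (Fin d) (Fin d) ℝ))⁻¹ * H).mulVec Y) ⬝ᵥ
          (Y - (Hᵀ * (H * Hᵀ + l • (1 : Matrix (Fin d) (Fin d) ℝ))⁻¹ * H).mulVec Y))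
        / ((Y - Ybar) ⬝ᵥ (Y - Ybar))
      ≥ 1 - ((Y ⬝ᵥ Y) ^ 2 * c0 ^ 2 * (2 * l + c1 ^ 2) ^ 2
          / (4 * l * ((Y - Ybar) ⬝ᵥ (Y - Ybar)))) / S := by
  set A := H * Hᵀ + l • (1 : Matrix (Fin d) (Fin d) ℝ) with hA
  set YY := Y ⬝ᵥ Y with hYY
  set D := (Y - Ybar) ⬝ᵥ (Y - Ybar) with hD
  have hDpos : 0 < D := dotSelfPos (sub_ne_zero.mpr hYne)
  -- A is positive definite, hence invertible
  have hApd : A.PosDef := by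
    refine Matrix.PosDef.of_dotProduct_mulVec_pos ?_ ?_
    · unfold Matrix.IsHermitian
      simp [hA, transpose_add, transpose_mul, transpose_smul]
    · intro x hx
      have h1 : x ⬝ᵥ (H * Hᵀ) *ᵥ x = (Hᵀ *ᵥ x) ⬝ᵥ (Hᵀ *ᵥ x) := by
        rw [← mulVec_mulVec, dotProduct_mulVec, ← mulVec_transpose]
      have h2 : x ⬝ᵥ A *ᵥ x = (Hᵀ *ᵥ x) ⬝ᵥ (Hᵀ *ᵥ x) + l * (x ⬝ᵥ x) := by
        rw [hA, add_mulVec, dotProduct_add, h1, smul_mulVec, one_mulVec,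
          dotProduct_smul, smul_eq_mul]
      simp only [RCLike.star_def, star_trivial]
      rw [h2]
      have := dotSelfPos hx
      have := dotSelfNonneg (Hᵀ *ᵥ x)
      positivity
  have hAdet : IsUnit A.det := isUnit_iff_isUnit_det _ |>.1 hApd.isUnit
  set u : Fin d → ℝ := A⁻¹ *ᵥ (H *ᵥ Y) with hu
  have hAu : A *ᵥ u = H *ᵥ Y := by
    rw [hu, mulVec_mulVec, Matrix.mul_nonsing_inv _ hAdet, one_mulVec]
  set v : Fin N → ℝ := Y - Hᵀ *ᵥ u with hv
  have hveq : Y - (Hᵀ * A⁻¹ * H) *ᵥ Y = v := by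
    rw [hv, hu, ← mulVec_mulVec, ← mulVec_mulVec]
  -- H v = l • u
  have hHv : H *ᵥ v = l • u := by
    have h0 : (H * Hᵀ) *ᵥ u + l • u = H *ᵥ Y := by
      rw [← hAu, hA, add_mulVec, smul_mulVec, one_mulVec]
    rw [hv, mulVec_sub, mulVec_mulVec, ← h0]
    abel
  -- R ≤ YY
  have hR : v ⬝ᵥ v ≤ YY := by
    have hYsplit : Y = v + Hᵀ *ᵥ u := by rw [hv]; abel
    have hcross : v ⬝ᵥ (Hᵀ *ᵥ u) = l * (u ⬝ᵥ u) := by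
      rw [mulVec_transpose, dotProduct_comm v, ← dotProduct_mulVec, hHv, dotProduct_smul,
        smul_eq_mul]
    have h1 : YY = v ⬝ᵥ v + 2 * (l * (u ⬝ᵥ u)) + (Hᵀ *ᵥ u) ⬝ᵥ (Hᵀ *ᵥ u) := by
      rw [hYY]
      nth_rewrite 1 [hYsplit]; nth_rewrite 1 [hYsplit]
      rw [add_dotProduct, dotProduct_add, dotProduct_add, ← hcross,
        dotProduct_comm (Hᵀ *ᵥ u) v]
      ring
    have h2 := dotSelfNonneg u
    have h3 := dotSelfNonneg (Hᵀ *ᵥ u)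
    nlinarith
  have hRnn := dotSelfNonneg v
  have hYYnn : 0 ≤ YY := dotSelfNonneg Y
  -- S ≤ c0^2 * c1^2 * YY
  have hSW : S = (W *ᵥ (H *ᵥ Y)) ⬝ᵥ (W *ᵥ (H *ᵥ Y)) := by
    have e : Hᵀ * Wᵀ * W * H = (W * H)ᵀ * (W * H) := by
      rw [transpose_mul, Matrix.mul_assoc]
    rw [hS, e, ← mulVec_mulVec, dotProduct_mulVec, vecMul_transpose, ← mulVec_mulVec]
  have hHY : (H *ᵥ Y) ⬝ᵥ (H *ᵥ Y) ≤ c1 ^ 2 * YY := by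
    have h1 : ∀ i, (H *ᵥ Y) i * (H *ᵥ Y) i ≤ (∑ j, (H i j) ^ 2) * YY := by
      intro i
      have := Finset.sum_mul_sq_le_sq_mul_sq Finset.univ (fun j => H i j) Y
      have hYY2 : YY = ∑ j, (Y j) ^ 2 := by rw [hYY]; simp [dotProduct, sq]
      calc (H *ᵥ Y) i * (H *ᵥ Y) i = (∑ j, H i j * Y j) ^ 2 := by
            simp [mulVec, dotProduct, sq]
        _ ≤ (∑ j, (H i j) ^ 2) * ∑ j, (Y j) ^ 2 := this
        _ = (∑ j, (H i j) ^ 2) * YY := by rw [hYY2]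
    calc (H *ᵥ Y) ⬝ᵥ (H *ᵥ Y) = ∑ i, (H *ᵥ Y) i * (H *ᵥ Y) i := rfl
      _ ≤ ∑ i, (∑ j, (H i j) ^ 2) * YY := Finset.sum_le_sum fun i _ => h1 i
      _ = (∑ i, ∑ j, (H i j) ^ 2) * YY := by rw [Finset.sum_mul]
      _ ≤ c1 ^ 2 * YY := by
          apply mul_le_mul_of_nonneg_right hH hYYnn
  have hSle : S ≤ c0 ^ 2 * (c1 ^ 2 * YY) := by
    calc S ≤ c0 ^ 2 * ((H *ᵥ Y) ⬝ᵥ (H *ᵥ Y)) := by rw [hSW]; exact hW (H *ᵥ Y)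
      _ ≤ c0 ^ 2 * (c1 ^ 2 * YY) := by
          apply mul_le_mul_of_nonneg_left hHY (sq_nonneg c0)
  -- key inequality
  have key : v ⬝ᵥ v * S * (4 * l) ≤ YY ^ 2 * c0 ^ 2 * (2 * l + c1 ^ 2) ^ 2 := by
    have h1 : v ⬝ᵥ v * S ≤ YY * (c0 ^ 2 * (c1 ^ 2 * YY)) :=
      mul_le_mul hR hSle hSpos.le hYYnn
    have h2 : 4 * l * c1 ^ 2 ≤ (2 * l + c1 ^ 2) ^ 2 := by nlinarith [sq_nonneg l, sq_nonneg (c1^2)]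
    have h3 : 4 * l * (v ⬝ᵥ v * S) ≤ 4 * l * (YY * (c0 ^ 2 * (c1 ^ 2 * YY))) :=
      mul_le_mul_of_nonneg_left h1 (by positivity)
    have h4 : (c0 ^ 2 * YY ^ 2) * (4 * l * c1 ^ 2) ≤ (c0 ^ 2 * YY ^ 2) * (2 * l + c1 ^ 2) ^ 2 :=
      mul_le_mul_of_nonneg_left h2 (by positivity)
    nlinarith
  rw [ge_iff_le, sub_le_sub_iff_left, hveq, div_div,
    div_le_div_iff₀ hDpos (by positivity)]
  nlinarith [mul_le_mul_of_nonneg_left key hDpos.le]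
end
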